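/- Let X ⊆ ℝ^K be a compact convex set of nonnegative vectors containing at least one vector with all coordinates strictly positive. Then X contains exactly one proportionally fair vector: there is a unique x ∈ X with all coordinates strictly positive such that Σ_{k=1}^K (y_k − x_k)/x_k ≤ 0 for every y ∈ X. -/

import Mathlib

open Finset

private lemma log_lb17 {s : ℝ} (h : -(1/2) ≤ s) : s - 2*s^2 ≤ Real.log (1+s) := by
  have h1 : (0:ℝ) < 1 + s := by linarith
  have h2 := Real.one_sub_inv_le_log_of_pos h1
  have h3 : (1+s)⁻¹ * (1+s) = 1 := inv_mul_cancel₀ h1.ne'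
  nlinarith [mul_nonneg (sq_nonneg s) (by linarith : (0:ℝ) ≤ 1 + 2*s)]

/-- Existence and uniqueness of the proportionally fair vector: a compact convex set of
nonnegative vectors containing a strictly positive vector contains exactly one
proportionally fair vector, i.e., exactly one `x` with strictly positive coordinates
such that `∑ k, (y k - x k) / x k ≤ 0` for every `y ∈ X`. -/
theorem stmt17 (K : ℕ) (X : Set (Fin K → ℝ)) (hcomp : IsCompact X)
    (hconv : Convex ℝ X) (hnn : ∀ x ∈ X, ∀ k, 0 ≤ x k)
    (hpos : ∃ z ∈ X, ∀ k, 0 < z k) :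
    ∃! x : Fin K → ℝ, x ∈ X ∧ (∀ k, 0 < x k) ∧
      ∀ y ∈ X, ∑ k, (y k - x k) / x k ≤ 0 := by
  classical
  obtain ⟨z, hzX, hz⟩ := hpos
  obtain ⟨C, hC⟩ := hcomp.isBounded.exists_norm_le
  set M : ℝ := max C 1 with hMdef
  have hM1 : (1:ℝ) ≤ M := le_max_right _ _
  have hbd : ∀ w ∈ X, ∀ k, w k ≤ M := by
    intro w hw k
    calc w k ≤ |w k| := le_abs_self _
    _ = ‖w k‖ := rfl
    _ ≤ ‖w‖ := norm_le_pi_norm w k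
    _ ≤ C := hC w hw
    _ ≤ M := le_max_left _ _
  set f : (Fin K → ℝ) → ℝ := fun w => ∑ k, Real.log (w k) with hfdef
  set m : ℝ := f z with hmdef
  set δ : ℝ := Real.exp (m - K * Real.log M - 1) with hδdef
  have hδpos : 0 < δ := Real.exp_pos _
  have hlogδ : Real.log δ = m - K * Real.log M - 1 := Real.log_exp _
  set T : Set (Fin K → ℝ) := X ∩ {w | ∀ k, min δ (z k) ≤ w k} with hTdef
  have hTz : z ∈ T := ⟨hzX, fun k => min_le_right _ _⟩
  have hTclosed : IsClosed {w : Fin K → ℝ | ∀ k, min δ (z k) ≤ w k} := by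
    have : {w : Fin K → ℝ | ∀ k, min δ (z k) ≤ w k}
        = ⋂ k, {w : Fin K → ℝ | min δ (z k) ≤ w k} := by
      ext w; simp
    rw [this]
    exact isClosed_iInter fun k => isClosed_le continuous_const (continuous_apply k)
  have hTcomp : IsCompact T := hcomp.inter_right hTclosed
  have hTposmin : ∀ k, 0 < min δ (z k) := fun k => lt_min hδpos (hz k)
  have hfc : ContinuousOn f T := by
    apply continuousOn_finset_sum
    intro k _
    apply ContinuousOn.log ((continuous_apply k).continuousOn)
    intro w hw
    exact ne_of_gt (lt_of_lt_of_le (hTposmin k) (hw.2 k))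
  obtain ⟨x, hxT, hxmax⟩ := hTcomp.exists_isMaxOn ⟨z, hTz⟩ hfc
  have hxX : x ∈ X := hxT.1
  have hxpos : ∀ k, 0 < x k := fun k => lt_of_lt_of_le (hTposmin k) (hxT.2 k)
  have hmfx : m ≤ f x := hxmax hTz
  -- x maximizes f over all positive points of X
  have hA : ∀ w ∈ X, (∀ k, 0 < w k) → f w ≤ f x := by
    intro w hw hwpos
    by_cases hwT : ∀ k, min δ (z k) ≤ w k
    · exact hxmax ⟨hw, hwT⟩
    · push_neg at hwT
      obtain ⟨k0, hk0⟩ := hwT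
      have hwk0δ : w k0 < δ := lt_of_lt_of_le hk0 (min_le_left _ _)
      have hsplit : f w = Real.log (w k0) + ∑ k ∈ univ.erase k0, Real.log (w k) :=
        (Finset.add_sum_erase _ _ (mem_univ k0)).symm
      have hbound : ∑ k ∈ univ.erase k0, Real.log (w k) ≤ K * Real.log M := by
        calc ∑ k ∈ univ.erase k0, Real.log (w k)
            ≤ ∑ _k ∈ univ.erase k0, Real.log M := by
              apply Finset.sum_le_sum
              intro k _
              exact Real.log_le_log (hwpos k) (hbd w hw k)
          _ = ((univ.erase k0).card : ℝ) * Real.log M := by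
              rw [Finset.sum_const, nsmul_eq_mul]
          _ ≤ K * Real.log M := by
              apply mul_le_mul_of_nonneg_right _ (Real.log_nonneg hM1)
              have h1 : (univ.erase k0).card ≤ K := by
                simpa using (Finset.card_erase_le.trans (by simp))
              exact_mod_cast h1
      have hlog1 : Real.log (w k0) ≤ Real.log δ :=
        Real.log_le_log (hwpos k0) hwk0δ.le
      have : f w ≤ m - 1 := by rw [hsplit]; rw [hlogδ] at hlog1; linarith
      linarith
  -- first-order condition
  have hFOC : ∀ y ∈ X, ∑ k, (y k - x k) / x k ≤ 0 := by
    intro y hyX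
    set u : Fin K → ℝ := fun k => (y k - x k) / x k with hudef
    have hu1 : ∀ k, -1 ≤ u k := by
      intro k
      rw [hudef]
      rw [le_div_iff₀ (hxpos k)]
      have := hnn y hyX k
      linarith
    have key : ∀ t : ℝ, 0 < t → t ≤ 1/2 → ∑ k, u k ≤ 2 * t * ∑ k, (u k)^2 := by
      intro t ht ht2
      set w : Fin K → ℝ := fun k => x k + t * (y k - x k) with hwdef
      have hwmem : w ∈ X := by
        have h := hconv hxX hyX (by linarith : (0:ℝ) ≤ 1 - t) ht.le (by ring)
        convert h using 1
        funext k
        simp [hwdef]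
        ring
      have htu : ∀ k, -(1/2) ≤ t * u k := by
        intro k
        nlinarith [hu1 k]
      have hmulpos : ∀ k, 0 < 1 + t * u k := fun k => by nlinarith [htu k]
      have hwk : ∀ k, w k = x k * (1 + t * u k) := by
        intro k
        rw [hwdef, hudef]
        field_simp [(hxpos k).ne']
      have hwpos : ∀ k, 0 < w k := fun k => by
        rw [hwk k]; exact mul_pos (hxpos k) (hmulpos k)
      have hfw : f w ≤ f x := hA w hwmem hwpos
      have hfw2 : f w = f x + ∑ k, Real.log (1 + t * u k) := by
        rw [hfdef]
        simp only
        rw [← Finset.sum_add_distrib]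
        apply Finset.sum_congr rfl
        intro k _
        rw [hwk k, Real.log_mul (ne_of_gt (hxpos k)) (ne_of_gt (hmulpos k))]
      have hsum : ∑ k, Real.log (1 + t * u k) ≤ 0 := by linarith
      have hlb : ∑ k, (t * u k - 2*(t * u k)^2) ≤ ∑ k, Real.log (1 + t * u k) :=
        Finset.sum_le_sum fun k _ => log_lb17 (htu k)
      have hexp : ∑ k, (t * u k - 2*(t * u k)^2)
          = t * (∑ k, u k) - 2*t^2 * (∑ k, (u k)^2) := by
        rw [Finset.mul_sum, Finset.mul_sum, ← Finset.sum_sub_distrib]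
        apply Finset.sum_congr rfl
        intro k _
        ring
      rw [hexp] at hlb
      nlinarith [le_trans hlb hsum]
    by_contra hS
    push_neg at hS
    set S := ∑ k, u k with hSdef
    set Q := ∑ k, (u k)^2 with hQdef
    have hQ : 0 ≤ Q := Finset.sum_nonneg fun k _ => sq_nonneg _
    have h41 : (0:ℝ) < 4*Q + 1 := by linarith
    set t := min (1/2) (S / (4*Q + 1)) with htdef
    have ht : 0 < t := lt_min (by norm_num) (div_pos hS h41)
    have hkey := key t ht (min_le_left _ _)
    have ht2 : t ≤ S / (4*Q + 1) := min_le_right _ _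
    have ht2' : t * (4*Q + 1) ≤ S := by
      rw [← le_div_iff₀ h41]; exact ht2
    nlinarith [mul_le_mul_of_nonneg_left ht2' hQ, mul_nonneg hQ hS.le]
  refine ⟨x, ⟨hxX, hxpos, hFOC⟩, ?_⟩
  rintro x' ⟨hx'X, hx'pos, hx'FOC⟩
  have h1 : ∑ k, (x k - x' k) / x' k ≤ 0 := hx'FOC x hxX
  have h2 : ∑ k, (x' k - x k) / x k ≤ 0 := hFOC x' hx'X
  have hid : ∀ k, (x' k - x k) / x k + (x k - x' k) / x' k
      = (x' k - x k)^2 / (x k * x' k) := by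
    intro k
    have hxk := (hxpos k).ne'
    have hx'k := (hx'pos k).ne'
    field_simp
    ring
  have hterm : ∀ k ∈ univ, (0:ℝ) ≤ (x' k - x k) / x k + (x k - x' k) / x' k := by
    intro k _
    rw [hid k]
    exact div_nonneg (sq_nonneg _) (mul_pos (hxpos k) (hx'pos k)).le
  have hsum : ∑ k, ((x' k - x k) / x k + (x k - x' k) / x' k) ≤ 0 := by
    rw [Finset.sum_add_distrib]; linarith
  have hzero := (Finset.sum_eq_zero_iff_of_nonneg hterm).mp
    (le_antisymm hsum (Finset.sum_nonneg hterm))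
  funext k
  have hk := hzero k (mem_univ k)
  rw [hid k] at hk
  have hden : (0:ℝ) < x k * x' k := mul_pos (hxpos k) (hx'pos k)
  field_simp at hk
  have h0 := (pow_eq_zero_iff (n := 2) (by norm_num)).mp ((div_eq_zero_iff.mp hk).resolve_right (mul_pos (hx'pos k) (hxpos k)).ne')
  linarith
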